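/- arXiv:2407.04029 — 2 statements merged into one kernel-verified Lean document; each statement's English description precedes it below -/
import Mathlib

section
/- Let n, d, c be positive integers, X̃ ∈ ℝ^{n×d} a fixed matrix, and 𝒵_*, ℰ_{f,1} ≥ 0. Then (1/2^{nc}) Σ_{σ : [n]×[c] → {−1,+1}} sup{ (1/(nc)) Σ_{i=1}^n Σ_{j=1}^c σ(i,j) · ((X̃ − E_f)Z)_{ij} : Z ∈ ℝ^{d×c}, E_f ∈ ℝ^{n×d}, ‖Z‖_* ≤ 𝒵_*, ‖E_f‖₁ ≤ ℰ_{f,1} } ≤ 𝒵_* · (‖X̃‖_F + √d · ℰ_{f,1}) / √(nc). -/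
open Matrix

/-- Entrywise ℓ1-norm of a real matrix. -/
noncomputable def l1Norm {m k : ℕ} (A : Matrix (Fin m) (Fin k) ℝ) : ℝ :=
  ∑ i, ∑ j, |A i j|

/-- Frobenius norm of a real matrix. -/
noncomputable def frobNorm {m k : ℕ} (A : Matrix (Fin m) (Fin k) ℝ) : ℝ :=
  Real.sqrt (∑ i, ∑ j, (A i j) ^ 2)

/-- Nuclear norm of a real matrix: tr((AᵀA)^{1/2}), i.e. the sum of the singular values. -/
noncomputable def nuclearNorm {m k : ℕ} (A : Matrix (Fin m) (Fin k) ℝ) : ℝ :=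
  ((Matrix.posSemidef_conjTranspose_mul_self A).1.eigenvectorUnitary.1 *
    Matrix.diagonal ((RCLike.ofReal : ℝ → ℝ) ∘ Real.sqrt ∘ (Matrix.posSemidef_conjTranspose_mul_self A).1.eigenvalues) *
    (star (Matrix.posSemidef_conjTranspose_mul_self A).1.eigenvectorUnitary : Matrix (Fin k) (Fin k) ℝ)).trace

/-- The real sign ±1 associated with a Boolean Rademacher variable. -/
noncomputable def sgn (b : Bool) : ℝ := if b then 1 else -1

/- ### Auxiliary lemmas -/

lemma psd_entry_sq_le {k : ℕ} {S : Matrix (Fin k) (Fin k) ℝ} (hS : S.PosSemidef)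
    (i j : Fin k) : S i j ^ 2 ≤ S i i * S j j := by
  have hji : S j i = S i j := by simpa using hS.1.apply i j
  rcases eq_or_ne i j with rfl | hij
  · rw [sq]
  have key : ∀ t : ℝ, 0 ≤ S i i * (t * t) + 2 * S i j * t + S j j := by
    intro t
    have h := hS.dotProduct_mulVec_nonneg (t • (Pi.single i 1 : Fin k → ℝ) + Pi.single j 1)
    simp only [star_trivial, mulVec_add, mulVec_smul, dotProduct_add, add_dotProduct,
      dotProduct_smul, smul_dotProduct, smul_eq_mul, mulVec_single, dotProduct_single,
      single_dotProduct, mul_one, one_mul, Matrix.col_apply, MulOpposite.op_one, one_smul] at h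
    rw [hji] at h; ring_nf at h ⊢; linarith
  have hd : discrim (S i i) (2 * S i j) (S j j) ≤ 0 := discrim_le_zero key
  rw [discrim] at hd
  nlinarith [hd]

lemma psd_diag_nonneg {k : ℕ} {S : Matrix (Fin k) (Fin k) ℝ} (hS : S.PosSemidef)
    (i : Fin k) : 0 ≤ S i i := by
  have h := hS.dotProduct_mulVec_nonneg ((Pi.single i 1 : Fin k → ℝ))
  simpa using h

lemma frob_le_nuclear {d c : ℕ} (Z : Matrix (Fin d) (Fin c) ℝ) :
    frobNorm Z ≤ nuclearNorm Z := by
  set h := Matrix.posSemidef_conjTranspose_mul_self Z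
  set S := h.1.eigenvectorUnitary.1 *
    Matrix.diagonal ((RCLike.ofReal : ℝ → ℝ) ∘ Real.sqrt ∘ h.1.eigenvalues) *
    (star h.1.eigenvectorUnitary : Matrix (Fin c) (Fin c) ℝ) with hSdef
  have hs : S.PosSemidef := by
    rw [hSdef]
    exact (PosSemidef.diagonal (fun i => by simp [Real.sqrt_nonneg])).mul_mul_conjTranspose_same _
  have hmul : S * S = Zᴴ * Z := by
    conv_rhs => rw [h.1.spectral_theorem, Unitary.conjStarAlgAut_apply]
    rw [hSdef]
    have hU : (star h.1.eigenvectorUnitary : Matrix (Fin c) (Fin c) ℝ) *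
        h.1.eigenvectorUnitary.1 = 1 := Unitary.coe_star_mul_self _
    rw [show ∀ A B C D E F : Matrix (Fin c) (Fin c) ℝ, A * B * C * (D * E * F) =
      A * (B * (C * D) * E) * F from fun A B C D E F => by simp only [Matrix.mul_assoc]]
    rw [hU, Matrix.mul_one, diagonal_mul_diagonal]
    congr 3
    funext i
    simp
    exact Real.mul_self_sqrt (h.eigenvalues_nonneg i)
  have htr : ∑ i, ∑ j, (Z i j) ^ 2 = ∑ i, ∑ j, (S i j) ^ 2 := by
    have h1 : (S * S).trace = ∑ i, ∑ j, (S i j) ^ 2 := by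
      simp only [Matrix.trace, Matrix.diag, Matrix.mul_apply]
      rw [Finset.sum_comm]
      refine Finset.sum_congr rfl fun i _ => Finset.sum_congr rfl fun j _ => ?_
      have : S j i = S i j := by simpa using hs.1.apply i j
      rw [this, sq]
    have h2 : (Zᴴ * Z).trace = ∑ i, ∑ j, (Z i j) ^ 2 := by
      simp only [Matrix.trace, Matrix.diag, Matrix.mul_apply, Matrix.conjTranspose_apply,
        star_trivial]
      rw [Finset.sum_comm]
      refine Finset.sum_congr rfl fun i _ => Finset.sum_congr rfl fun j _ => ?_
      rw [sq]
    rw [← h2, ← hmul, h1]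
  have hb : ∑ i, ∑ j, (S i j) ^ 2 ≤ S.trace ^ 2 := by
    have hle : ∑ i, ∑ j, (S i j) ^ 2 ≤ ∑ i, ∑ j, S i i * S j j :=
      Finset.sum_le_sum fun i _ => Finset.sum_le_sum fun j _ => psd_entry_sq_le hs i j
    calc ∑ i, ∑ j, (S i j) ^ 2 ≤ ∑ i, ∑ j, S i i * S j j := hle
      _ = S.trace ^ 2 := by
        simp only [Matrix.trace, Matrix.diag, sq]
        rw [Finset.sum_mul_sum]
  have htrn : 0 ≤ S.trace := Finset.sum_nonneg fun i _ => psd_diag_nonneg hs i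
  rw [frobNorm, nuclearNorm, ← hSdef]
  calc Real.sqrt (∑ i, ∑ j, (Z i j) ^ 2) ≤ Real.sqrt (S.trace ^ 2) :=
        Real.sqrt_le_sqrt (by rw [htr]; exact hb)
    _ = S.trace := by rw [Real.sqrt_sq htrn]

lemma sum_abs_le_sqrt_card {ι : Type*} [Fintype ι] (f : ι → ℝ) :
    ∑ i, |f i| ≤ Real.sqrt (Fintype.card ι) * Real.sqrt (∑ i, f i ^ 2) := by
  have h := Finset.sum_mul_sq_le_sq_mul_sq Finset.univ (fun _ => (1:ℝ)) (fun i => |f i|)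
  simp only [one_mul, one_pow, sq_abs, Finset.sum_const, Finset.card_univ, nsmul_eq_mul,
    mul_one] at h
  have h0 : 0 ≤ ∑ i, |f i| := Finset.sum_nonneg fun i _ => abs_nonneg _
  calc ∑ i, |f i| = Real.sqrt ((∑ i, |f i|) ^ 2) := (Real.sqrt_sq h0).symm
    _ ≤ Real.sqrt ((Fintype.card ι) * ∑ i, f i ^ 2) := Real.sqrt_le_sqrt h
    _ = _ := Real.sqrt_mul (by positivity) _

lemma sqrt_sum_sq_le_sum_abs' {ι : Type*} [Fintype ι] (f : ι → ℝ) :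
    Real.sqrt (∑ i, f i ^ 2) ≤ ∑ i, |f i| := by
  have h : ∑ i, f i ^ 2 ≤ (∑ i, |f i|) ^ 2 := by
    rw [sq]
    calc ∑ i, f i ^ 2 = ∑ i, |f i| * |f i| := by
          refine Finset.sum_congr rfl fun i _ => ?_; rw [sq, abs_mul_abs_self]
      _ ≤ ∑ i, |f i| * ∑ j, |f j| := Finset.sum_le_sum fun i _ =>
          mul_le_mul_of_nonneg_left (Finset.single_le_sum (fun j _ => abs_nonneg (f j))
            (Finset.mem_univ i)) (abs_nonneg _)
      _ = (∑ i, |f i|) * ∑ j, |f j| := by rw [← Finset.sum_mul]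
  calc Real.sqrt (∑ i, f i ^ 2) ≤ Real.sqrt ((∑ i, |f i|) ^ 2) := Real.sqrt_le_sqrt h
    _ = ∑ i, |f i| := Real.sqrt_sq (Finset.sum_nonneg fun i _ => abs_nonneg _)

lemma sqrt_sum_sq_add' {ι : Type*} [Fintype ι] (f g : ι → ℝ) :
    Real.sqrt (∑ i, (f i + g i) ^ 2) ≤
      Real.sqrt (∑ i, f i ^ 2) + Real.sqrt (∑ i, g i ^ 2) := by
  have hcs : ∑ i, f i * g i ≤ Real.sqrt (∑ i, f i ^ 2) * Real.sqrt (∑ i, g i ^ 2) := by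
    have h := Finset.sum_mul_sq_le_sq_mul_sq Finset.univ f g
    calc ∑ i, f i * g i ≤ |∑ i, f i * g i| := le_abs_self _
      _ = Real.sqrt ((∑ i, f i * g i) ^ 2) := (Real.sqrt_sq_eq_abs _).symm
      _ ≤ Real.sqrt ((∑ i, f i ^ 2) * ∑ i, g i ^ 2) := Real.sqrt_le_sqrt h
      _ = _ := Real.sqrt_mul (Finset.sum_nonneg fun i _ => sq_nonneg _) _
  have hexp : ∑ i, (f i + g i) ^ 2 ≤
      (Real.sqrt (∑ i, f i ^ 2) + Real.sqrt (∑ i, g i ^ 2)) ^ 2 := by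
    have hf : ∑ i, f i ^ 2 = Real.sqrt (∑ i, f i ^ 2) ^ 2 :=
      (Real.sq_sqrt (Finset.sum_nonneg fun i _ => sq_nonneg _)).symm
    have hg : ∑ i, g i ^ 2 = Real.sqrt (∑ i, g i ^ 2) ^ 2 :=
      (Real.sq_sqrt (Finset.sum_nonneg fun i _ => sq_nonneg _)).symm
    have heq : ∑ i, (f i + g i) ^ 2 = ∑ i, f i ^ 2 + 2 * ∑ i, f i * g i + ∑ i, g i ^ 2 := by
      rw [Finset.mul_sum, ← Finset.sum_add_distrib, ← Finset.sum_add_distrib]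
      exact Finset.sum_congr rfl fun i _ => by ring
    calc ∑ i, (f i + g i) ^ 2
        = ∑ i, f i ^ 2 + 2 * ∑ i, f i * g i + ∑ i, g i ^ 2 := heq
      _ ≤ ∑ i, f i ^ 2 + 2 * (Real.sqrt (∑ i, f i ^ 2) * Real.sqrt (∑ i, g i ^ 2))
            + ∑ i, g i ^ 2 := by linarith [hcs]
      _ = (Real.sqrt (∑ i, f i ^ 2) + Real.sqrt (∑ i, g i ^ 2)) ^ 2 := by
          rw [add_sq, ← hf, ← hg]; ring
  calc Real.sqrt (∑ i, (f i + g i) ^ 2)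
      ≤ Real.sqrt ((Real.sqrt (∑ i, f i ^ 2) + Real.sqrt (∑ i, g i ^ 2)) ^ 2) :=
        Real.sqrt_le_sqrt hexp
    _ = _ := Real.sqrt_sq (by positivity)

lemma frobNorm_nonneg {m k : ℕ} (A : Matrix (Fin m) (Fin k) ℝ) : 0 ≤ frobNorm A :=
  Real.sqrt_nonneg _

lemma frobNorm_prod {m k : ℕ} (A : Matrix (Fin m) (Fin k) ℝ) :
    frobNorm A = Real.sqrt (∑ p : Fin m × Fin k, (A p.1 p.2) ^ 2) := by
  rw [frobNorm, Fintype.sum_prod_type]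

lemma frob_mul_le {m k l : ℕ} (A : Matrix (Fin m) (Fin k) ℝ) (B : Matrix (Fin k) (Fin l) ℝ) :
    frobNorm (A * B) ≤ frobNorm A * frobNorm B := by
  have key : ∑ i, ∑ j, ((A * B) i j) ^ 2 ≤
      (∑ i, ∑ t, (A i t) ^ 2) * (∑ t, ∑ j, (B t j) ^ 2) := by
    have h1 : ∀ (i : Fin m) (j : Fin l), ((A * B) i j) ^ 2 ≤
        (∑ t, (A i t) ^ 2) * (∑ t, (B t j) ^ 2) := by
      intro i j
      rw [Matrix.mul_apply]
      exact Finset.sum_mul_sq_le_sq_mul_sq Finset.univ (fun t => A i t) (fun t => B t j)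
    calc ∑ i, ∑ j, ((A * B) i j) ^ 2
        ≤ ∑ i, ∑ j, (∑ t, (A i t) ^ 2) * (∑ t, (B t j) ^ 2) :=
          Finset.sum_le_sum fun i _ => Finset.sum_le_sum fun j _ => h1 i j
      _ = (∑ i, ∑ t, (A i t) ^ 2) * (∑ t, ∑ j, (B t j) ^ 2) := by
          rw [Finset.sum_mul]
          refine Finset.sum_congr rfl fun i _ => ?_
          rw [← Finset.mul_sum, Finset.sum_comm]
  rw [frobNorm, frobNorm, frobNorm]
  calc Real.sqrt (∑ i, ∑ j, ((A * B) i j) ^ 2)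
      ≤ Real.sqrt ((∑ i, ∑ t, (A i t) ^ 2) * (∑ t, ∑ j, (B t j) ^ 2)) :=
        Real.sqrt_le_sqrt key
    _ = _ := Real.sqrt_mul (Finset.sum_nonneg fun i _ =>
        Finset.sum_nonneg fun t _ => sq_nonneg _) _

lemma frob_sub_le {m k : ℕ} (X E : Matrix (Fin m) (Fin k) ℝ) :
    frobNorm (X - E) ≤ frobNorm X + frobNorm E := by
  rw [frobNorm_prod, frobNorm_prod, frobNorm_prod]
  calc Real.sqrt (∑ p : Fin m × Fin k, ((X - E) p.1 p.2) ^ 2)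
      = Real.sqrt (∑ p : Fin m × Fin k, (X p.1 p.2 + -E p.1 p.2) ^ 2) := by
        refine congrArg _ (Finset.sum_congr rfl fun p _ => ?_)
        simp [Matrix.sub_apply, sub_eq_add_neg]
    _ ≤ Real.sqrt (∑ p : Fin m × Fin k, (X p.1 p.2) ^ 2)
        + Real.sqrt (∑ p : Fin m × Fin k, ((-E p.1 p.2)) ^ 2) :=
        sqrt_sum_sq_add' _ _
    _ = _ := by simp [neg_sq]

lemma frob_le_l1 {m k : ℕ} (E : Matrix (Fin m) (Fin k) ℝ) :
    frobNorm E ≤ l1Norm E := by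
  rw [frobNorm_prod, l1Norm]
  calc Real.sqrt (∑ p : Fin m × Fin k, (E p.1 p.2) ^ 2)
      ≤ ∑ p : Fin m × Fin k, |E p.1 p.2| := sqrt_sum_sq_le_sum_abs' _
    _ = ∑ i, ∑ j, |E i j| := by rw [Fintype.sum_prod_type]

lemma sgn_mul_le (b : Bool) (x : ℝ) : sgn b * x ≤ |x| := by
  cases b
  · simpa [sgn] using neg_le_abs x
  · simpa [sgn] using le_abs_self x

/-- the empirical Rademacher complexity of the class of matrices
    (X̃ − E_f)Z with ‖Z‖_* ≤ 𝒵_* and ‖E_f‖₁ ≤ ℰ_{f,1}, on the index set [n]×[c], is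
    bounded by 𝒵_*·(‖X̃‖_F + √d·ℰ_{f,1})/√(nc). -/
theorem rademacher_feature_noise_bound (n d c : ℕ) (hn : 0 < n) (hd : 0 < d) (hc : 0 < c)
    (Xt : Matrix (Fin n) (Fin d) ℝ) (Zs Ef1 : ℝ) (hZs : 0 ≤ Zs) (hEf1 : 0 ≤ Ef1) :
    ((1 : ℝ) / 2 ^ (n * c)) * ∑ σ : Fin n × Fin c → Bool,
        sSup {v : ℝ | ∃ (Z : Matrix (Fin d) (Fin c) ℝ) (Ef : Matrix (Fin n) (Fin d) ℝ),
          nuclearNorm Z ≤ Zs ∧ l1Norm Ef ≤ Ef1 ∧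
          v = ((1 : ℝ) / (n * c)) * ∑ i : Fin n, ∑ j : Fin c,
            sgn (σ (i, j)) * ((Xt - Ef) * Z) i j} ≤
      Zs * (frobNorm Xt + Real.sqrt d * Ef1) / Real.sqrt (n * c) := by
  have hn' : (0:ℝ) < n := by exact_mod_cast hn
  have hc' : (0:ℝ) < c := by exact_mod_cast hc
  have hN : (0:ℝ) < (n:ℝ) * c := mul_pos hn' hc'
  have hsqN : (0:ℝ) < Real.sqrt ((n:ℝ) * c) := Real.sqrt_pos.mpr hN
  set B := Zs * (frobNorm Xt + Real.sqrt d * Ef1) / Real.sqrt ((n:ℝ) * c) with hBdef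
  have hB : 0 ≤ B :=
    div_nonneg (mul_nonneg hZs (add_nonneg (frobNorm_nonneg _)
      (mul_nonneg (Real.sqrt_nonneg _) hEf1))) (Real.sqrt_nonneg _)
  have h1d : (1:ℝ) ≤ Real.sqrt d := by
    rw [show (1:ℝ) = Real.sqrt 1 from (Real.sqrt_one).symm]
    exact Real.sqrt_le_sqrt (by exact_mod_cast hd)
  have hsup : ∀ σ : Fin n × Fin c → Bool,
      sSup {v : ℝ | ∃ (Z : Matrix (Fin d) (Fin c) ℝ) (Ef : Matrix (Fin n) (Fin d) ℝ),
          nuclearNorm Z ≤ Zs ∧ l1Norm Ef ≤ Ef1 ∧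
          v = ((1 : ℝ) / (n * c)) * ∑ i : Fin n, ∑ j : Fin c,
            sgn (σ (i, j)) * ((Xt - Ef) * Z) i j} ≤ B := by
    intro σ
    apply Real.sSup_le _ hB
    rintro v ⟨Z, Ef, hZ, hE, rfl⟩
    set M := (Xt - Ef) * Z with hM
    have hfrobM : frobNorm M ≤ (frobNorm Xt + Real.sqrt d * Ef1) * Zs := by
      calc frobNorm M ≤ frobNorm (Xt - Ef) * frobNorm Z := frob_mul_le _ _
        _ ≤ (frobNorm Xt + Real.sqrt d * Ef1) * Zs := by
          apply mul_le_mul _ ((frob_le_nuclear Z).trans hZ) (frobNorm_nonneg _)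
          · exact add_nonneg (frobNorm_nonneg _) (mul_nonneg (Real.sqrt_nonneg _) hEf1)
          · calc frobNorm (Xt - Ef) ≤ frobNorm Xt + frobNorm Ef := frob_sub_le _ _
              _ ≤ frobNorm Xt + Real.sqrt d * Ef1 := by
                have : frobNorm Ef ≤ Real.sqrt d * Ef1 :=
                  ((frob_le_l1 Ef).trans hE).trans (le_mul_of_one_le_left hEf1 h1d)
                linarith
    have hT : ∑ i : Fin n, ∑ j : Fin c, sgn (σ (i, j)) * M i j ≤
        Real.sqrt ((n:ℝ) * c) * ((frobNorm Xt + Real.sqrt d * Ef1) * Zs) := by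
      have step1 : ∑ i : Fin n, ∑ j : Fin c, sgn (σ (i, j)) * M i j ≤
          ∑ i : Fin n, ∑ j : Fin c, |M i j| :=
        Finset.sum_le_sum fun i _ => Finset.sum_le_sum fun j _ => sgn_mul_le _ _
      have step2 : ∑ i : Fin n, ∑ j : Fin c, |M i j| ≤
          Real.sqrt ((n:ℝ) * c) * frobNorm M := by
        have h := sum_abs_le_sqrt_card (fun p : Fin n × Fin c => M p.1 p.2)
        rw [Fintype.card_prod, Fintype.card_fin, Fintype.card_fin] at h
        calc ∑ i : Fin n, ∑ j : Fin c, |M i j|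
            = ∑ p : Fin n × Fin c, |M p.1 p.2| := by rw [Fintype.sum_prod_type]
          _ ≤ Real.sqrt ((n * c : ℕ)) * Real.sqrt (∑ p : Fin n × Fin c, (M p.1 p.2) ^ 2) := h
          _ = Real.sqrt ((n:ℝ) * c) * frobNorm M := by
              rw [frobNorm_prod]; push_cast; ring_nf
      calc ∑ i : Fin n, ∑ j : Fin c, sgn (σ (i, j)) * M i j
          ≤ Real.sqrt ((n:ℝ) * c) * frobNorm M := step1.trans step2
        _ ≤ Real.sqrt ((n:ℝ) * c) * ((frobNorm Xt + Real.sqrt d * Ef1) * Zs) :=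
            mul_le_mul_of_nonneg_left hfrobM hsqN.le
    calc ((1 : ℝ) / (n * c)) * ∑ i : Fin n, ∑ j : Fin c, sgn (σ (i, j)) * M i j
        ≤ ((1 : ℝ) / (n * c)) *
            (Real.sqrt ((n:ℝ) * c) * ((frobNorm Xt + Real.sqrt d * Ef1) * Zs)) :=
          mul_le_mul_of_nonneg_left hT (by positivity)
      _ = B := by
          rw [hBdef]
          have key : ∀ s : ℝ, 0 < s → s * s = (n:ℝ) * c →
              ((1:ℝ) / ((n:ℝ) * c)) * (s * ((frobNorm Xt + Real.sqrt d * Ef1) * Zs)) =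
                Zs * (frobNorm Xt + Real.sqrt d * Ef1) / s := by
            intro s hs hss
            rw [← hss]
            field_simp
          exact key _ hsqN (Real.mul_self_sqrt hN.le)
  calc ((1 : ℝ) / 2 ^ (n * c)) * ∑ σ : Fin n × Fin c → Bool,
        sSup {v : ℝ | ∃ (Z : Matrix (Fin d) (Fin c) ℝ) (Ef : Matrix (Fin n) (Fin d) ℝ),
          nuclearNorm Z ≤ Zs ∧ l1Norm Ef ≤ Ef1 ∧
          v = ((1 : ℝ) / (n * c)) * ∑ i : Fin n, ∑ j : Fin c,
            sgn (σ (i, j)) * ((Xt - Ef) * Z) i j}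
      ≤ ((1 : ℝ) / 2 ^ (n * c)) * ∑ _σ : Fin n × Fin c → Bool, B :=
        mul_le_mul_of_nonneg_left (Finset.sum_le_sum fun σ _ => hsup σ) (by positivity)
    _ = B := by
        rw [Finset.sum_const, Finset.card_univ, Fintype.card_fun, Fintype.card_prod,
          Fintype.card_fin, Fintype.card_fin, Fintype.card_bool, nsmul_eq_mul]
        push_cast
        field_simp
end

section
/- Let n, d, r be positive integers, τ > 0, U ∈ ℝ^{n×r} with UᵀU = I_r, V ∈ ℝ^{d×r} with VᵀV = I_r, and s : {1,…,r} → ℝ with s_i ≥ 0 for all i. Set X̂ = U · diag(s) · Vᵀ and X* = U · diag(max(s_i − τ, 0)) · Vᵀ. Then X* is a global minimizer over X ∈ ℝ^{n×d} of the function X ↦ τ‖X‖_* + (1/2)‖X − X̂‖_F²; that is, for every X ∈ ℝ^{n×d}, τ‖X*‖_* + (1/2)‖X* − X̂‖_F² ≤ τ‖X‖_* + (1/2)‖X − X̂‖_F². -/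
open Matrix

/-- Squared Frobenius norm of a real matrix. -/
noncomputable def frobSq {m k : ℕ} (A : Matrix (Fin m) (Fin k) ℝ) : ℝ :=
  ∑ i, ∑ j, (A i j) ^ 2

/-- Frobenius inner product of two real matrices. -/
def ip {m k : ℕ} (A B : Matrix (Fin m) (Fin k) ℝ) : ℝ := ∑ i, ∑ j, A i j * B i j

lemma real_conjTranspose {m k : ℕ} (A : Matrix (Fin m) (Fin k) ℝ) : Aᴴ = Aᵀ := by
  ext i j; simp [conjTranspose_apply]

lemma ip_eq_trace {m k : ℕ} (A B : Matrix (Fin m) (Fin k) ℝ) :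
    ip A B = (Aᵀ * B).trace := by
  simp only [ip, trace, diag_apply, mul_apply, transpose_apply]
  exact Finset.sum_comm

lemma ip_comm {m k : ℕ} (A B : Matrix (Fin m) (Fin k) ℝ) : ip A B = ip B A := by
  simp only [ip]; congr 1; ext i; congr 1; ext j; ring

lemma frobSq_eq_ip {m k : ℕ} (A : Matrix (Fin m) (Fin k) ℝ) : frobSq A = ip A A := by
  simp [frobSq, ip, sq]

lemma frobSq_nonneg {m k : ℕ} (A : Matrix (Fin m) (Fin k) ℝ) : 0 ≤ frobSq A := by
  apply Finset.sum_nonneg; intro i _; apply Finset.sum_nonneg; intro j _; positivity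

lemma ip_sub_left {m k : ℕ} (A B C : Matrix (Fin m) (Fin k) ℝ) :
    ip (A - B) C = ip A C - ip B C := by
  simp only [ip, Matrix.sub_apply, sub_mul, Finset.sum_sub_distrib]

lemma frobSq_sub {m k : ℕ} (A B : Matrix (Fin m) (Fin k) ℝ) :
    frobSq (A - B) = frobSq A - 2 * ip A B + frobSq B := by
  simp only [frobSq, ip, Matrix.sub_apply, Finset.mul_sum, ← Finset.sum_add_distrib,
    ← Finset.sum_sub_distrib]
  congr 1; ext i; congr 1; ext j; ring

lemma ip_mul_ortho {m k : ℕ} (A C : Matrix (Fin m) (Fin k) ℝ)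
    (Q : Matrix (Fin k) (Fin k) ℝ) (hQ : Q * Qᵀ = 1) : ip (A * Q) (C * Q) = ip A C := by
  rw [ip_eq_trace, ip_eq_trace]
  have : (A * Q)ᵀ * (C * Q) = Qᵀ * (Aᵀ * C) * Q := by
    simp [transpose_mul, Matrix.mul_assoc]
  rw [this, trace_mul_cycle, ← Matrix.mul_assoc, hQ, Matrix.one_mul]

/-- Key duality inequality: if `B` contracts norms by a factor `τ`, then
    `⟨B, X⟩ ≤ τ‖X‖₊`. Proved via the spectral decomposition of `XᵀX` and
    columnwise Cauchy–Schwarz. -/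
lemma ip_le_tau_nuclear {m k : ℕ} (τ : ℝ) (hτ : 0 ≤ τ) (B X : Matrix (Fin m) (Fin k) ℝ)
    (hB : ∀ q : Fin k → ℝ, ∑ i, (B *ᵥ q) i ^ 2 ≤ τ ^ 2 * ∑ i, q i ^ 2) :
    ip B X ≤ τ * nuclearNorm X := by
  have h : PosSemidef (Xᴴ * X) := posSemidef_conjTranspose_mul_self X
  have hH := h.1
  set Q : Matrix (Fin k) (Fin k) ℝ := (hH.eigenvectorUnitary : Matrix (Fin k) (Fin k) ℝ)
    with hQdef
  have hstar : star Q = Qᵀ := by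
    rw [Matrix.star_eq_conjTranspose]; ext i j; simp [conjTranspose_apply]
  have hQ1 : Qᵀ * Q = 1 := by
    rw [← hstar]; exact Matrix.mem_unitaryGroup_iff'.mp hH.eigenvectorUnitary.2
  have hQ2 : Q * Qᵀ = 1 := by
    rw [← hstar]; exact Matrix.mem_unitaryGroup_iff.mp hH.eigenvectorUnitary.2
  have hnn : nuclearNorm X = ∑ j, Real.sqrt (hH.eigenvalues j) := by
    rw [nuclearNorm]
    rw [hstar, trace_mul_cycle, hQ1, Matrix.one_mul, trace_diagonal]
    simp
  have hdiag : (X * Q)ᵀ * (X * Q) = diagonal hH.eigenvalues := by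
    have e := hH.conjStarAlgAut_star_eigenvectorUnitary
    rw [Unitary.conjStarAlgAut_apply, Unitary.coe_star, star_star] at e
    rw [hstar] at e
    have : (X * Q)ᵀ * (X * Q) = Qᵀ * (Xᴴ * X) * Q := by
      rw [show Xᴴ = Xᵀ by ext i j; simp [conjTranspose_apply]]
      simp [transpose_mul, Matrix.mul_assoc]
    rw [this, e]
    ext i j
    simp [diagonal]
  have hXcol : ∀ j, ∑ i, (X * Q) i j ^ 2 = hH.eigenvalues j := by
    intro j
    have := congrFun (congrFun hdiag j) j
    simpa [mul_apply, diagonal, sq, mul_comm] using this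
  have hBcol : ∀ j, ∑ i, (B * Q) i j ^ 2 ≤ τ ^ 2 := by
    intro j
    have h1 := hB (fun i => Q i j)
    have h2 : (fun i => (B *ᵥ fun i => Q i j) i) = fun i => (B * Q) i j := by
      funext i; simp [mulVec, dotProduct, mul_apply]
    have h3 : ∑ i, Q i j ^ 2 = 1 := by
      have := congrFun (congrFun hQ1 j) j
      simpa [mul_apply, one_apply, sq] using this
    calc ∑ i, (B * Q) i j ^ 2 = ∑ i, (B *ᵥ fun i => Q i j) i ^ 2 :=
          Finset.sum_congr rfl fun i _ => by rw [congrFun h2 i]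
      _ ≤ τ ^ 2 * ∑ i, Q i j ^ 2 := h1
      _ = τ ^ 2 := by rw [h3, mul_one]
  calc ip B X = ip (B * Q) (X * Q) := (ip_mul_ortho B X Q hQ2).symm
    _ = ∑ j, ∑ i, (B * Q) i j * (X * Q) i j := by rw [ip]; exact Finset.sum_comm
    _ ≤ ∑ j, Real.sqrt (∑ i, (B * Q) i j ^ 2) * Real.sqrt (∑ i, (X * Q) i j ^ 2) := by
        apply Finset.sum_le_sum
        intro j _
        exact Real.sum_mul_le_sqrt_mul_sqrt _ _ _
    _ ≤ ∑ j, τ * Real.sqrt (hH.eigenvalues j) := by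
        apply Finset.sum_le_sum
        intro j _
        rw [hXcol j]
        apply mul_le_mul_of_nonneg_right _ (Real.sqrt_nonneg _)
        calc Real.sqrt (∑ i, (B * Q) i j ^ 2) ≤ Real.sqrt (τ ^ 2) :=
              Real.sqrt_le_sqrt (hBcol j)
          _ = τ := Real.sqrt_sq hτ
    _ = τ * nuclearNorm X := by rw [hnn, Finset.mul_sum]

section UV
variable {n d r : ℕ} (U : Matrix (Fin n) (Fin r) ℝ) (hU : Uᵀ * U = 1)
  (V : Matrix (Fin d) (Fin r) ℝ) (hV : Vᵀ * V = 1)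

include hU hV in
lemma ip_UdV (a b : Fin r → ℝ) :
    ip (U * diagonal a * Vᵀ) (U * diagonal b * Vᵀ) = ∑ i, a i * b i := by
  rw [ip_eq_trace]
  have h1 : (U * diagonal a * Vᵀ)ᵀ * (U * diagonal b * Vᵀ)
      = V * diagonal (fun i => a i * b i) * Vᵀ := by
    calc (U * diagonal a * Vᵀ)ᵀ * (U * diagonal b * Vᵀ)
        = V * diagonal a * (Uᵀ * U) * diagonal b * Vᵀ := by
          simp [transpose_mul, diagonal_transpose, Matrix.mul_assoc]
      _ = V * diagonal (fun i => a i * b i) * Vᵀ := by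
          rw [hU]; simp [Matrix.mul_one, diagonal_mul_diagonal, Matrix.mul_assoc]
  rw [h1, trace_mul_cycle, hV, Matrix.one_mul, trace_diagonal]

include hU hV in
lemma nuclear_UdV (a : Fin r → ℝ) (ha : ∀ i, 0 ≤ a i) :
    nuclearNorm (U * diagonal a * Vᵀ) = ∑ i, a i := by
  set A := U * diagonal a * Vᵀ with hA
  have hAA : Aᴴ * A = V * diagonal (fun i => a i * a i) * Vᵀ := by
    rw [real_conjTranspose, hA]
    calc (U * diagonal a * Vᵀ)ᵀ * (U * diagonal a * Vᵀ)
        = V * diagonal a * (Uᵀ * U) * diagonal a * Vᵀ := by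
          simp [transpose_mul, diagonal_transpose, Matrix.mul_assoc]
      _ = _ := by rw [hU]; simp [Matrix.mul_one, diagonal_mul_diagonal, Matrix.mul_assoc]
  have hSpsd : PosSemidef (V * diagonal a * Vᵀ) := by
    have : V * diagonal a * Vᵀ
        = (diagonal (fun i => Real.sqrt (a i)) * Vᵀ)ᴴ *
          (diagonal (fun i => Real.sqrt (a i)) * Vᵀ) := by
      have hdd : diagonal (fun i => Real.sqrt (a i)) * (diagonal (fun i => Real.sqrt (a i)) * Vᵀ)
          = diagonal a * Vᵀ := by
        rw [← Matrix.mul_assoc, diagonal_mul_diagonal,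
          show (fun i => Real.sqrt (a i) * Real.sqrt (a i)) = a from
            funext fun i => Real.mul_self_sqrt (ha i)]
      rw [real_conjTranspose]
      simp only [transpose_mul, diagonal_transpose, transpose_transpose, Matrix.mul_assoc, hdd]
    rw [this]
    exact posSemidef_conjTranspose_mul_self _
  have hsq : (V * diagonal a * Vᵀ) ^ 2 = Aᴴ * A := by
    rw [hAA, pow_two]
    calc V * diagonal a * Vᵀ * (V * diagonal a * Vᵀ)
        = V * diagonal a * (Vᵀ * V) * diagonal a * Vᵀ := by simp [Matrix.mul_assoc]
      _ = _ := by rw [hV]; simp [Matrix.mul_one, diagonal_mul_diagonal, Matrix.mul_assoc]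
  have key : nuclearNorm A = (cfc Real.sqrt (Aᴴ * A)).trace := by
    rw [(posSemidef_conjTranspose_mul_self A).1.cfc_eq, IsHermitian.cfc, Unitary.conjStarAlgAut_apply]; rfl
  open scoped MatrixOrder in
  have hsqrt : CFC.sqrt (Aᴴ * A) = cfc Real.sqrt (Aᴴ * A) := by
    rw [CFC.sqrt_eq_real_sqrt (Aᴴ * A) (posSemidef_conjTranspose_mul_self A).nonneg,
      cfcₙ_eq_cfc (hf0 := by simp)]
  open scoped MatrixOrder in
  rw [key, ← hsqrt, ← hsq,
    CFC.sqrt_sq _ hSpsd.nonneg, trace_mul_cycle, hV, Matrix.one_mul, trace_diagonal]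

lemma sum_sq_mulVec_ortho (y : Fin r → ℝ) (hU : Uᵀ * U = 1) :
    ∑ i, (U *ᵥ y) i ^ 2 = ∑ i, y i ^ 2 := by
  have h1 : (U *ᵥ y) ⬝ᵥ (U *ᵥ y) = y ⬝ᵥ y := by
    rw [dotProduct_mulVec]
    have : (U *ᵥ y) ᵥ* U = y := by
      rw [← vecMul_transpose, vecMul_vecMul, hU, vecMul_one]
    rw [this]
  simpa [dotProduct, sq] using h1

include hV in
lemma sum_sq_transpose_mulVec_le (q : Fin d → ℝ) :
    ∑ j, (Vᵀ *ᵥ q) j ^ 2 ≤ ∑ i, q i ^ 2 := by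
  set z : Fin r → ℝ := Vᵀ *ᵥ q with hz
  set a : ℝ := ∑ j, z j ^ 2 with ha
  set b : ℝ := ∑ i, q i ^ 2 with hb
  have ha0 : 0 ≤ a := Finset.sum_nonneg fun j _ => sq_nonneg _
  have hb0 : 0 ≤ b := Finset.sum_nonneg fun i _ => sq_nonneg _
  have hp : ∑ i, (V *ᵥ z) i ^ 2 = a := sum_sq_mulVec_ortho V z hV
  have hpq : ∑ i, (V *ᵥ z) i * q i = a := by
    have h0 : q ⬝ᵥ (V *ᵥ z) = z ⬝ᵥ z := by
      rw [dotProduct_mulVec, ← mulVec_transpose, ← hz]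
    have e : ∑ i, (V *ᵥ z) i * q i = q ⬝ᵥ (V *ᵥ z) := by
      simp [dotProduct, mul_comm]
    rw [e, h0]
    simp [dotProduct, sq, ha]
  have cs := Finset.sum_mul_sq_le_sq_mul_sq Finset.univ (fun i => (V *ᵥ z) i) q
  rw [hpq, hp] at cs
  nlinarith

include hU hV in
lemma UdV_contracts (τ : ℝ) (w : Fin r → ℝ) (hw0 : ∀ i, 0 ≤ w i) (hwτ : ∀ i, w i ≤ τ)
    (q : Fin d → ℝ) :
    ∑ i, ((U * diagonal w * Vᵀ) *ᵥ q) i ^ 2 ≤ τ ^ 2 * ∑ i, q i ^ 2 := by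
  set z : Fin r → ℝ := Vᵀ *ᵥ q with hz
  have h1 : (U * diagonal w * Vᵀ) *ᵥ q = U *ᵥ (diagonal w *ᵥ z) := by
    rw [mulVec_mulVec, mulVec_mulVec]
  rw [h1, sum_sq_mulVec_ortho U _ hU]
  have h2 : ∀ i, (diagonal w *ᵥ z) i = w i * z i := by
    intro i; simp [mulVec, dotProduct, diagonal]
  have h3 : ∑ i, (diagonal w *ᵥ z) i ^ 2 ≤ τ ^ 2 * ∑ i, z i ^ 2 := by
    rw [Finset.mul_sum]
    apply Finset.sum_le_sum
    intro i _
    rw [h2 i, mul_pow]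
    exact mul_le_mul_of_nonneg_right (pow_le_pow_left₀ (hw0 i) (hwτ i) 2) (sq_nonneg _)
  calc ∑ i, (diagonal w *ᵥ z) i ^ 2 ≤ τ ^ 2 * ∑ i, z i ^ 2 := h3
    _ ≤ τ ^ 2 * ∑ i, q i ^ 2 :=
        mul_le_mul_of_nonneg_left (sum_sq_transpose_mulVec_le V hV q) (sq_nonneg _)

end UV

/-- singular value thresholding. If X̂ = U diag(s) Vᵀ with UᵀU = I, VᵀV = I
    and s ≥ 0, then X* = U diag(max(s−τ,0)) Vᵀ globally minimizes
    X ↦ τ‖X‖_* + (1/2)‖X − X̂‖_F². -/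
theorem svt_isMinimizer (n d r : ℕ) (hn : 0 < n) (hd : 0 < d) (hr : 0 < r)
    (τ : ℝ) (hτ : 0 < τ)
    (U : Matrix (Fin n) (Fin r) ℝ) (hU : Uᵀ * U = 1)
    (V : Matrix (Fin d) (Fin r) ℝ) (hV : Vᵀ * V = 1)
    (s : Fin r → ℝ) (hs : ∀ i, 0 ≤ s i) :
    ∀ X : Matrix (Fin n) (Fin d) ℝ,
      τ * nuclearNorm (U * Matrix.diagonal (fun i => max (s i - τ) 0) * Vᵀ) +
          (1 / 2) * frobSq (U * Matrix.diagonal (fun i => max (s i - τ) 0) * Vᵀ -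
            U * Matrix.diagonal s * Vᵀ) ≤
        τ * nuclearNorm X + (1 / 2) * frobSq (X - U * Matrix.diagonal s * Vᵀ) := by
  intro X
  set g : Fin r → ℝ := fun i => max (s i - τ) 0 with hgdef
  set w : Fin r → ℝ := fun i => s i - g i with hwdef
  have hg0 : ∀ i, 0 ≤ g i := fun i => le_max_right _ _
  have hw0 : ∀ i, 0 ≤ w i := by
    intro i
    rcases le_total (s i) τ with h | h
    · simp [hwdef, hgdef, max_eq_right (by linarith : s i - τ ≤ 0), hs i]
    · simp [hwdef, hgdef, max_eq_left (by linarith : (0:ℝ) ≤ s i - τ)]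
      linarith [hτ.le]
  have hwτ : ∀ i, w i ≤ τ := by
    intro i
    rcases le_total (s i) τ with h | h
    · simp [hwdef, hgdef, max_eq_right (by linarith : s i - τ ≤ 0)]
      linarith
    · simp [hwdef, hgdef, max_eq_left (by linarith : (0:ℝ) ≤ s i - τ)]
  have hgw : ∀ i, g i * w i = τ * g i := by
    intro i
    rcases le_total (s i) τ with h | h
    · simp [hwdef, hgdef, max_eq_right (by linarith : s i - τ ≤ 0)]
    · simp [hwdef, hgdef, max_eq_left (by linarith : (0:ℝ) ≤ s i - τ)]
      ring
  set Xstar := U * diagonal g * Vᵀ with hXstar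
  set Xhat := U * diagonal s * Vᵀ with hXhat
  set Wm := U * diagonal w * Vᵀ with hWm
  have hWdiff : Xhat - Xstar = Wm := by
    rw [hXhat, hXstar, hWm, ← Matrix.sub_mul, ← Matrix.mul_sub, diagonal_sub]
  -- nuclear norm of Xstar
  have h1 : nuclearNorm Xstar = ∑ i, g i := nuclear_UdV U hU V hV g hg0
  -- frobSq (Xstar - Xhat)
  have h2 : frobSq (Xstar - Xhat) = ∑ i, w i * w i := by
    have e : Xstar - Xhat = U * diagonal (fun i => g i - s i) * Vᵀ := by
      rw [hXstar, hXhat, ← Matrix.sub_mul, ← Matrix.mul_sub, diagonal_sub]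
    rw [frobSq_eq_ip, e, ip_UdV U hU V hV]
    apply Finset.sum_congr rfl
    intro i _
    simp [hwdef]
    ring
  -- frobSq Wm
  have h3 : frobSq Wm = ∑ i, w i * w i := by
    rw [frobSq_eq_ip, hWm, ip_UdV U hU V hV]
  -- ip Xstar Wm
  have h4 : ip Xstar Wm = τ * ∑ i, g i := by
    rw [hXstar, hWm, ip_UdV U hU V hV, Finset.mul_sum]
    exact Finset.sum_congr rfl fun i _ => hgw i
  -- expand frobSq (X - Xhat)
  have h5 : frobSq (X - Xhat) =
      frobSq (X - Xstar) - 2 * (ip X Wm - ip Xstar Wm) + frobSq Wm := by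
    have e : X - Xhat = (X - Xstar) - Wm := by rw [← hWdiff]; abel
    rw [e, frobSq_sub, ip_sub_left]
  -- duality bound
  have h6 : ip X Wm ≤ τ * nuclearNorm X := by
    rw [ip_comm]
    exact ip_le_tau_nuclear τ hτ.le Wm X (UdV_contracts U hU V hV τ w hw0 hwτ)
  have h7 : 0 ≤ frobSq (X - Xstar) := frobSq_nonneg _
  rw [h1, h2, h5, h3, h4]
  linarith
end
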